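/- For every b ∈ (0,1), the function x ↦ g(x,b) is continuous on [1/2, 1); in particular, lim_{x → (1/2)⁺} (x^{1-b} - (1-x)^{1-b}) / (x·(1-x)^{1-b} - (1-x)·x^{1-b}) = 2/b - 2 = g(1/2, b). -/

import Mathlib

open Filter Topology

/-- The function `g(x,b)` of the paper, for `b ∈ (0,1)`:
`g(x,b) = (x^{1-b} - (1-x)^{1-b}) / (x·(1-x)^{1-b} - (1-x)·x^{1-b})` for
`x ∈ (1/2,1)` and `g(1/2,b) = 2/b - 2`. -/
noncomputable def g (x b : ℝ) : ℝ :=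
  if x = 1 / 2 then 2 / b - 2
  else (x ^ (1 - b) - (1 - x) ^ (1 - b)) /
    (x * (1 - x) ^ (1 - b) - (1 - x) * x ^ (1 - b))

/-- Lemma 2(i) of the paper: for every `b ∈ (0,1)` the map `x ↦ g(x,b)` is
continuous on `[1/2, 1)`; in particular the defining expression of `g` tends to
`2/b - 2 = g(1/2,b)` as `x → 1/2⁺`. -/
theorem stmt_5 (b : ℝ) (hb : 0 < b ∧ b < 1) :
    ContinuousOn (fun x => g x b) (Set.Ico (1 / 2 : ℝ) 1) ∧
    Filter.Tendsto
      (fun x : ℝ => (x ^ (1 - b) - (1 - x) ^ (1 - b)) /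
        (x * (1 - x) ^ (1 - b) - (1 - x) * x ^ (1 - b)))
      (nhdsWithin (1 / 2 : ℝ) (Set.Ioi (1 / 2 : ℝ)))
      (nhds (2 / b - 2)) ∧
    g (1 / 2) b = 2 / b - 2 := by
  obtain ⟨hb0, hb1⟩ := hb
  set N : ℝ → ℝ := fun x => x ^ (1 - b) - (1 - x) ^ (1 - b) with hNdef
  set D : ℝ → ℝ := fun x => x * (1 - x) ^ (1 - b) - (1 - x) * x ^ (1 - b) with hDdef
  have hhalf : (0:ℝ) < 1/2 := by norm_num
  set c : ℝ := (1/2 : ℝ) ^ (1 - b - 1) with hcdef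
  have hc0 : 0 < c := Real.rpow_pos_of_pos hhalf _
  have ha : (1/2 : ℝ) ^ (1 - b) = c * (1/2) := by
    have h := Real.rpow_add hhalf (1 - b - 1) 1
    rw [Real.rpow_one, show (1 - b - 1) + 1 = 1 - b by ring] at h
    rw [hcdef, ← h]
  have hN0 : N (1/2) = 0 := by simp [hNdef]; norm_num
  have hD0 : D (1/2) = 0 := by simp [hDdef]; norm_num
  -- derivatives at 1/2
  have h1 : HasDerivAt (fun x : ℝ => x ^ (1 - b)) ((1 - b) * c) (1/2) := by
    have := Real.hasDerivAt_rpow_const (x := (1/2:ℝ)) (p := 1 - b) (Or.inl (by norm_num))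
    rw [← hcdef] at this
    exact this
  have hsub : HasDerivAt (fun x : ℝ => 1 - x) (-1) (1/2) := (hasDerivAt_id (1/2:ℝ)).const_sub 1
  have h2 : HasDerivAt (fun x : ℝ => (1 - x) ^ (1 - b)) (-((1 - b) * c)) (1/2) := by
    have := hsub.rpow_const (p := 1 - b) (Or.inl (by norm_num))
    convert this using 1
    rw [hcdef]
    norm_num
    ring
  have hN' : HasDerivAt N (2 * (1 - b) * c) (1/2) := by
    have := h1.sub h2
    refine this.congr_deriv ?_
    ring
  have hD' : HasDerivAt D (b * c) (1/2) := by
    have hx1 : HasDerivAt (fun x : ℝ => x * (1 - x) ^ (1 - b))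
        (1 * ((1 - (1/2:ℝ)) ^ (1 - b)) + (1/2) * (-((1 - b) * c))) (1/2) :=
      (hasDerivAt_id (1/2:ℝ)).mul h2
    have hx2 : HasDerivAt (fun x : ℝ => (1 - x) * x ^ (1 - b))
        ((-1) * ((1/2:ℝ) ^ (1 - b)) + (1 - (1/2:ℝ)) * ((1 - b) * c)) (1/2) :=
      hsub.mul h1
    have := hx1.sub hx2
    refine this.congr_deriv ?_
    have h12 : (1 - (1/2:ℝ)) = 1/2 := by norm_num
    rw [h12, ha]
    ring
  have hbc : b * c ≠ 0 := by positivity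
  have hNs : Tendsto (slope N (1/2)) (𝓝[≠] (1/2:ℝ)) (𝓝 (2 * (1 - b) * c)) :=
    hasDerivAt_iff_tendsto_slope.mp hN'
  have hDs : Tendsto (slope D (1/2)) (𝓝[≠] (1/2:ℝ)) (𝓝 (b * c)) :=
    hasDerivAt_iff_tendsto_slope.mp hD'
  have hval : 2 * (1 - b) * c / (b * c) = 2 / b - 2 := by
    field_simp
  have hmono : 𝓝[>] (1/2:ℝ) ≤ 𝓝[≠] (1/2:ℝ) :=
    nhdsWithin_mono _ (fun x hx => ne_of_gt hx)
  have key : Tendsto (fun x => N x / D x) (𝓝[>] (1/2:ℝ)) (𝓝 (2 / b - 2)) := by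
    have hquot : Tendsto (fun x => slope N (1/2) x / slope D (1/2) x)
        (𝓝[>] (1/2:ℝ)) (𝓝 (2 / b - 2)) := by
      rw [← hval]
      exact ((hNs.div hDs hbc).mono_left hmono)
    refine hquot.congr' ?_
    filter_upwards [self_mem_nhdsWithin] with x hx
    have hx' : x - 1/2 ≠ 0 := sub_ne_zero.mpr (ne_of_gt hx)
    rw [slope_def_field, slope_def_field, hN0, hD0, sub_zero, sub_zero,
      div_div_div_comm, div_self hx', div_one]
  -- D is positive on (1/2, 1)
  have hDpos : ∀ x : ℝ, 1/2 < x → x < 1 → 0 < D x := by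
    intro x hx1 hx2
    have hx0 : 0 < x := by linarith
    have h1x : 0 < 1 - x := by linarith
    have hlt : 1 - x < x := by linarith
    have hpow : (1 - x) ^ b < x ^ b := Real.rpow_lt_rpow h1x.le hlt hb0
    have hxe : x ^ b * x ^ (1 - b) = x := by
      rw [← Real.rpow_add hx0, show b + (1 - b) = 1 by ring, Real.rpow_one]
    have h1xe : (1 - x) ^ b * (1 - x) ^ (1 - b) = 1 - x := by
      rw [← Real.rpow_add h1x, show b + (1 - b) = 1 by ring, Real.rpow_one]
    have hp1 : 0 < x ^ (1 - b) := Real.rpow_pos_of_pos hx0 _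
    have hp2 : 0 < (1 - x) ^ (1 - b) := Real.rpow_pos_of_pos h1x _
    have : (1 - x) ^ b * ((1 - x) ^ (1 - b) * x ^ (1 - b)) <
        x ^ b * ((1 - x) ^ (1 - b) * x ^ (1 - b)) := by
      apply mul_lt_mul_of_pos_right hpow
      positivity
    have e1 : x ^ b * ((1 - x) ^ (1 - b) * x ^ (1 - b)) = x * (1 - x) ^ (1 - b) := by
      rw [mul_comm ((1 - x) ^ (1 - b)), ← mul_assoc, hxe]
    have e2 : (1 - x) ^ b * ((1 - x) ^ (1 - b) * x ^ (1 - b)) = (1 - x) * x ^ (1 - b) := by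
      rw [← mul_assoc, h1xe]
    show 0 < x * (1 - x) ^ (1 - b) - (1 - x) * x ^ (1 - b)
    rw [← e1, ← e2]
    linarith
  have hg0 : g (1/2) b = 2 / b - 2 := by simp [g]
  refine ⟨?_, key, hg0⟩
  -- continuity
  intro x hx
  rcases eq_or_lt_of_le hx.1 with heq | hlt
  · subst heq
    have h1 : ContinuousWithinAt (fun x => g x b) (Set.Ioi (1/2:ℝ)) (1/2) := by
      have ht : Filter.Tendsto (fun x => g x b) (𝓝[>] (1/2:ℝ)) (𝓝 (2 / b - 2)) := by
        refine key.congr' ?_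
        filter_upwards [self_mem_nhdsWithin] with y hy
        simp only [g, if_neg (ne_of_gt (Set.mem_Ioi.mp hy)), hNdef, hDdef]
      show Filter.Tendsto (fun x => g x b) (𝓝[>] (1/2:ℝ)) (𝓝 (g (1/2) b))
      rw [hg0]; exact ht
    have h2 : ContinuousWithinAt (fun x => g x b) (insert (1/2:ℝ) (Set.Ioi (1/2:ℝ))) (1/2) :=
      continuousWithinAt_insert_self.mpr h1
    exact h2.mono (fun y hy => by
      rcases eq_or_lt_of_le hy.1 with h | h
      · exact Or.inl h.symm
      · exact Or.inr h)
  · -- interior points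
    have hne : x ≠ 1/2 := ne_of_gt hlt
    have hx0 : 0 < x := by linarith
    have h1x : 0 < 1 - x := by linarith [hx.2]
    have hcN : ContinuousAt N x := by
      have c1 : ContinuousAt (fun y : ℝ => y ^ (1 - b)) x :=
        Real.continuousAt_rpow_const x _ (Or.inl (ne_of_gt hx0))
      have c2 : ContinuousAt (fun y : ℝ => (1 - y) ^ (1 - b)) x := by
        have : ContinuousAt (fun y : ℝ => y ^ (1 - b)) (1 - x) :=
          Real.continuousAt_rpow_const _ _ (Or.inl (ne_of_gt h1x))
        exact this.comp (by fun_prop)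
      exact c1.sub c2
    have hcD : ContinuousAt D x := by
      have c1 : ContinuousAt (fun y : ℝ => y ^ (1 - b)) x :=
        Real.continuousAt_rpow_const x _ (Or.inl (ne_of_gt hx0))
      have c2 : ContinuousAt (fun y : ℝ => (1 - y) ^ (1 - b)) x := by
        have : ContinuousAt (fun y : ℝ => y ^ (1 - b)) (1 - x) :=
          Real.continuousAt_rpow_const _ _ (Or.inl (ne_of_gt h1x))
        exact this.comp (by fun_prop)
      exact ((continuousAt_id).mul c2).sub ((by fun_prop : ContinuousAt (fun y : ℝ => 1 - y) x).mul c1)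
    have hDne : D x ≠ 0 := ne_of_gt (hDpos x hlt hx.2)
    have hq : ContinuousAt (fun y => N y / D y) x := hcN.div hcD hDne
    have : ContinuousAt (fun y => g y b) x := by
      refine hq.congr ?_
      filter_upwards [eventually_ne_nhds hne] with y hy
      simp only [g, if_neg hy, hNdef, hDdef]
    exact this.continuousWithinAt
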